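/- Let d, N ≥ 1, μ ∈ ℝ, f : ℝ^d → ℝ^d be C¹, k̄ = 1/N, ω̄ ≠ 0, and let ū : ℝ → ℝ^d be continuous and 1-periodic. For C¹ 1-periodic v, w : ℝ → ℂ^d, with L v = −ω̄ v' + μ[v(·+k̄) − 2v + v(·−k̄)] + Df(ū(·)) v and L* w = ω̄ w' + μ[w(·+k̄) − 2w + w(·−k̄)] + Df(ū(·))ᵀ w, one has for every t ∈ ℝ: d/dt Σ_{j=0}^{N−1} ⟨w(k̄ j + ω̄ t), v(k̄ j + ω̄ t)⟩ = Σ_{j=0}^{N−1} [ ⟨(L* w)(k̄ j + ω̄ t), v(k̄ j + ω̄ t)⟩ − ⟨w(k̄ j + ω̄ t), (L v)(k̄ j + ω̄ t)⟩ ], where ⟨·,·⟩ is the Hermitian inner product on ℂ^d. -/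

import Mathlib

open Complex

/-- Complexification of the Jacobian `Df(x)` applied to a complex vector. -/
noncomputable def cJac {d : ℕ} (f : (Fin d → ℝ) → (Fin d → ℝ)) (x : Fin d → ℝ)
    (Z : Fin d → ℂ) : Fin d → ℂ :=
  fun i => ∑ l : Fin d, ((fderiv ℝ f x (Pi.single l 1) i : ℝ) : ℂ) * Z l

/-- Complexification of the transposed Jacobian `Df(x)ᵀ` applied to a complex vector. -/
noncomputable def cJacT {d : ℕ} (f : (Fin d → ℝ) → (Fin d → ℝ)) (x : Fin d → ℝ)
    (Z : Fin d → ℂ) : Fin d → ℂ :=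
  fun i => ∑ l : Fin d, ((fderiv ℝ f x (Pi.single i 1) l : ℝ) : ℂ) * Z l

/-- The linearized operator `L v = −ω̄ v' + μ[v(·+k̄) − 2v + v(·−k̄)] + Df(ū(·)) v`. -/
noncomputable def Lop {d : ℕ} (μ ωb kb : ℝ) (f : (Fin d → ℝ) → (Fin d → ℝ))
    (ub : ℝ → Fin d → ℝ) (v : ℝ → Fin d → ℂ) (ζ : ℝ) : Fin d → ℂ :=
  (-ωb) • deriv v ζ + μ • (v (ζ + kb) - (2:ℂ) • v ζ + v (ζ - kb)) + cJac f (ub ζ) (v ζ)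

/-- The formal adjoint `L* w = ω̄ w' + μ[w(·+k̄) − 2w + w(·−k̄)] + Df(ū(·))ᵀ w`. -/
noncomputable def LopStar {d : ℕ} (μ ωb kb : ℝ) (f : (Fin d → ℝ) → (Fin d → ℝ))
    (ub : ℝ → Fin d → ℝ) (w : ℝ → Fin d → ℂ) (ζ : ℝ) : Fin d → ℂ :=
  ωb • deriv w ζ + μ • (w (ζ + kb) - (2:ℂ) • w ζ + w (ζ - kb)) + cJacT f (ub ζ) (w ζ)

lemma cyclic_sum (N : ℕ) (hN : N ≠ 0) (F G : ℕ → ℂ)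
    (h : ∀ j, F (j+1) = G j) (h0 : F 0 = G (N-1)) :
    ∑ j ∈ Finset.range N, F j = ∑ j ∈ Finset.range N, G j := by
  obtain ⟨M, rfl⟩ := Nat.exists_eq_succ_of_ne_zero hN
  rw [Finset.sum_range_succ' F, Finset.sum_range_succ G]
  simp only [h, h0, Nat.succ_sub_one]

lemma key_pointwise {d : ℕ} (μ ωb kb : ℝ) (f : (Fin d → ℝ) → (Fin d → ℝ))
    (ub : ℝ → Fin d → ℝ) (v w : ℝ → Fin d → ℂ) (x : ℝ) :
    ((∑ i : Fin d, (starRingEnd ℂ) (LopStar μ ωb kb f ub w x i) * v x i)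
      - ∑ i : Fin d, (starRingEnd ℂ) (w x i) * Lop μ ωb kb f ub v x i)
    = (∑ i : Fin d, ((starRingEnd ℂ) (deriv w x i * ωb) * v x i
        + (starRingEnd ℂ) (w x i) * (deriv v x i * ωb)))
      + (μ:ℂ) * ((∑ i : Fin d, (starRingEnd ℂ) (w (x+kb) i) * v x i)
        + (∑ i : Fin d, (starRingEnd ℂ) (w (x-kb) i) * v x i)
        - (∑ i : Fin d, (starRingEnd ℂ) (w x i) * v (x+kb) i)
        - (∑ i : Fin d, (starRingEnd ℂ) (w x i) * v (x-kb) i)) := by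
  have hJ : ∑ i : Fin d, (starRingEnd ℂ) (cJacT f (ub x) (w x) i) * v x i
      = ∑ i : Fin d, (starRingEnd ℂ) (w x i) * cJac f (ub x) (v x) i := by
    simp only [cJac, cJacT, map_sum, map_mul, Complex.conj_ofReal,
      Finset.mul_sum, Finset.sum_mul]
    rw [Finset.sum_comm]
    exact Finset.sum_congr rfl fun i _ => Finset.sum_congr rfl fun l _ => by ring
  have h1 : ∀ i : Fin d,
      (starRingEnd ℂ) (LopStar μ ωb kb f ub w x i) * v x i
        - (starRingEnd ℂ) (w x i) * Lop μ ωb kb f ub v x i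
      = ((starRingEnd ℂ) (deriv w x i * ωb) * v x i
          + (starRingEnd ℂ) (w x i) * (deriv v x i * ωb))
        + (μ:ℂ) * ((starRingEnd ℂ) (w (x+kb) i) * v x i
          + (starRingEnd ℂ) (w (x-kb) i) * v x i
          - (starRingEnd ℂ) (w x i) * v (x+kb) i
          - (starRingEnd ℂ) (w x i) * v (x-kb) i)
        + ((starRingEnd ℂ) (cJacT f (ub x) (w x) i) * v x i
          - (starRingEnd ℂ) (w x i) * cJac f (ub x) (v x) i) := by
    intro i
    simp only [LopStar, Lop, Pi.add_apply, Pi.smul_apply, Pi.sub_apply, smul_eq_mul,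
      Complex.real_smul, map_add, map_sub, map_mul, Complex.conj_ofReal, map_ofNat, Complex.ofReal_neg]
    ring
  rw [← Finset.sum_sub_distrib, Finset.sum_congr rfl fun i _ => h1 i]
  rw [Finset.sum_add_distrib, Finset.sum_add_distrib, Finset.sum_sub_distrib, hJ,
    sub_self, add_zero, ← Finset.mul_sum]
  congr 1
  rw [Finset.sum_sub_distrib, Finset.sum_sub_distrib, Finset.sum_add_distrib]

lemma Tsum_zero {d : ℕ} (N : ℕ) (hN : N ≠ 0) (kb : ℝ) (x : ℕ → ℝ)
    (v w : ℝ → Fin d → ℂ)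
    (hvper : ∀ ζ : ℝ, v (ζ + 1) = v ζ) (hwper : ∀ ζ : ℝ, w (ζ + 1) = w ζ)
    (hx1 : ∀ j : ℕ, x (j+1) = x j + kb) (hxN : x (N-1) + kb = x 0 + 1) :
    ∑ j ∈ Finset.range N,
      ((∑ i : Fin d, (starRingEnd ℂ) (w (x j + kb) i) * v (x j) i)
        + (∑ i : Fin d, (starRingEnd ℂ) (w (x j - kb) i) * v (x j) i)
        - (∑ i : Fin d, (starRingEnd ℂ) (w (x j) i) * v (x j + kb) i)
        - (∑ i : Fin d, (starRingEnd ℂ) (w (x j) i) * v (x j - kb) i)) = 0 := by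
  have hxm : x (N-1) = (x 0 - kb) + 1 := by linarith
  have h41 : ∑ j ∈ Finset.range N, ∑ i : Fin d, (starRingEnd ℂ) (w (x j) i) * v (x j - kb) i
      = ∑ j ∈ Finset.range N, ∑ i : Fin d, (starRingEnd ℂ) (w (x j + kb) i) * v (x j) i := by
    apply cyclic_sum N hN
    · intro j
      show (∑ i : Fin d, (starRingEnd ℂ) (w (x (j+1)) i) * v (x (j+1) - kb) i) = _
      rw [hx1 j, add_sub_cancel_right]
    · show (∑ i : Fin d, (starRingEnd ℂ) (w (x 0) i) * v (x 0 - kb) i)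
        = ∑ i : Fin d, (starRingEnd ℂ) (w (x (N-1) + kb) i) * v (x (N-1)) i
      rw [hxN, hxm, hvper, hwper]
  have h23 : ∑ j ∈ Finset.range N, ∑ i : Fin d, (starRingEnd ℂ) (w (x j - kb) i) * v (x j) i
      = ∑ j ∈ Finset.range N, ∑ i : Fin d, (starRingEnd ℂ) (w (x j) i) * v (x j + kb) i := by
    apply cyclic_sum N hN
    · intro j
      show (∑ i : Fin d, (starRingEnd ℂ) (w (x (j+1) - kb) i) * v (x (j+1)) i) = _
      rw [hx1 j, add_sub_cancel_right]
    · show (∑ i : Fin d, (starRingEnd ℂ) (w (x 0 - kb) i) * v (x 0) i)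
        = ∑ i : Fin d, (starRingEnd ℂ) (w (x (N-1)) i) * v (x (N-1) + kb) i
      rw [hxN, hxm, hvper, hwper]
  rw [Finset.sum_sub_distrib, Finset.sum_sub_distrib, Finset.sum_add_distrib, h41, h23]
  ring


/-- Duality relation: for `1`-periodic `C¹` functions `v, w`,
`d/dt Σ_j ⟨w(k̄j+ω̄t), v(k̄j+ω̄t)⟩ = Σ_j [⟨L*w, v⟩ − ⟨w, Lv⟩](k̄j+ω̄t)`. -/
theorem discrete_duality_transport
    (d N : ℕ) [NeZero N] (hd : 0 < d) (μ ωb : ℝ) (hω : ωb ≠ 0)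
    (f : (Fin d → ℝ) → (Fin d → ℝ)) (hf : ContDiff ℝ 1 f)
    (ub : ℝ → Fin d → ℝ) (hub : Continuous ub) (hubper : ∀ ζ : ℝ, ub (ζ + 1) = ub ζ)
    (v w : ℝ → Fin d → ℂ) (hv : ContDiff ℝ 1 v) (hw : ContDiff ℝ 1 w)
    (hvper : ∀ ζ : ℝ, v (ζ + 1) = v ζ) (hwper : ∀ ζ : ℝ, w (ζ + 1) = w ζ) :
    ∀ t : ℝ, HasDerivAt
      (fun t' : ℝ => ∑ j ∈ Finset.range N, ∑ i : Fin d,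
        (starRingEnd ℂ) (w ((j:ℝ)/(N:ℝ) + ωb * t') i) * v ((j:ℝ)/(N:ℝ) + ωb * t') i)
      (∑ j ∈ Finset.range N,
        ((∑ i : Fin d, (starRingEnd ℂ) (LopStar μ ωb (1/(N:ℝ)) f ub w ((j:ℝ)/(N:ℝ) + ωb * t) i)
            * v ((j:ℝ)/(N:ℝ) + ωb * t) i)
        - ∑ i : Fin d, (starRingEnd ℂ) (w ((j:ℝ)/(N:ℝ) + ωb * t) i)
            * Lop μ ωb (1/(N:ℝ)) f ub v ((j:ℝ)/(N:ℝ) + ωb * t) i)) t := by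
  intro t
  have hN0 : (N:ℝ) ≠ 0 := Nat.cast_ne_zero.mpr (NeZero.ne N)
  have hwd := hw.differentiable one_ne_zero
  have hvd := hv.differentiable one_ne_zero
  have hterm : ∀ j ∈ Finset.range N, HasDerivAt
      (fun t' : ℝ => ∑ i : Fin d,
        (starRingEnd ℂ) (w ((j:ℝ)/(N:ℝ) + ωb * t') i) * v ((j:ℝ)/(N:ℝ) + ωb * t') i)
      (∑ i : Fin d,
        ((starRingEnd ℂ) (deriv w ((j:ℝ)/(N:ℝ) + ωb * t) i * ωb) * v ((j:ℝ)/(N:ℝ) + ωb * t) i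
         + (starRingEnd ℂ) (w ((j:ℝ)/(N:ℝ) + ωb * t) i)
            * (deriv v ((j:ℝ)/(N:ℝ) + ωb * t) i * ωb))) t := by
    intro j _
    apply HasDerivAt.fun_sum
    intro i _
    set c := (j:ℝ)/(N:ℝ) with hc
    set x := c + ωb * t with hx
    have ha : HasDerivAt (fun t' : ℝ => c + ωb * t') ωb t := by
      simpa using ((hasDerivAt_id t).const_mul ωb).const_add c
    have hwx : HasDerivAt (fun ζ => w ζ i) (deriv w x i) x :=
      hasDerivAt_pi.mp ((hwd x).hasDerivAt) i
    have hvx : HasDerivAt (fun ζ => v ζ i) (deriv v x i) x :=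
      hasDerivAt_pi.mp ((hvd x).hasDerivAt) i
    have hw1 : HasDerivAt (fun t' => w (c + ωb * t') i) (deriv w x i * ωb) t := by
      have h2 := hwx.scomp (𝕜 := ℝ) t ha
      simpa only [Function.comp_def, Complex.real_smul, mul_comm] using h2
    have hv1 : HasDerivAt (fun t' => v (c + ωb * t') i) (deriv v x i * ωb) t := by
      have h2 := hvx.scomp (𝕜 := ℝ) t ha
      simpa only [Function.comp_def, Complex.real_smul, mul_comm] using h2
    have h3 := hw1.star.fun_mul hv1
    simpa only [starRingEnd_apply] using h3
  have hsum := HasDerivAt.fun_sum hterm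
  convert hsum using 1
  · rfl
  simp only [key_pointwise]
  rw [Finset.sum_add_distrib, ← Finset.mul_sum]
  have hT := Tsum_zero (d := d) N (NeZero.ne N) (1/(N:ℝ))
      (fun j : ℕ => (j:ℝ)/(N:ℝ) + ωb * t) v w hvper hwper
      (by intro j; show ((j:ℕ)+1:ℕ) / (N:ℝ) + ωb * t = _; push_cast; ring)
      (by
        show ((N-1:ℕ):ℝ)/(N:ℝ) + ωb * t + 1/(N:ℝ) = ((0:ℕ):ℝ)/(N:ℝ) + ωb * t + 1
        rw [Nat.cast_sub (Nat.one_le_iff_ne_zero.mpr (NeZero.ne N))]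
        field_simp
        ring)
  rw [hT, mul_zero, add_zero]
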